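/- Let α ∈ ℂ and let φ, ψ : ℂ → ℂ be entire functions with φ nowhere vanishing, satisfying ψ''(x) = (2x − 2ψ(x)φ(x))·ψ(x), φ''(x) = (2x − 2ψ(x)φ(x))·φ(x), and φ'(x)ψ(x) − φ(x)ψ'(x) = 2α for all x ∈ ℂ. Define a_n by a₀ = φ, a_n = a_{n-1}' + ψ·(∑_{i+j=n-2, i,j≥0} a_i a_j), and the Hankel determinants τ_N = det(a_{i+j})_{0≤i,j≤N-1} for N ≥ 1 (τ₀ = 1); assume τ_m is nowhere vanishing for every m > 0. Define f_n by f₀ = −φ, f₁ = φ', f₂ = (φ''φ − (φ')² + ψφ³)/φ, f_n = f_{n-1}' + (1/φ)·∑_{k=2}^{n-2} f_k f_{n-k} for n ≥ 3, and set θ₁ = 1 and θ_{n+1} = det(f_{i+j})_{1≤i,j≤n} for n ≥ 1. Then for every n ≥ 1 and all x ∈ ℂ: θ_n(x) = τ_n(x)/φ(x). -/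

import Mathlib

open Finset


private lemma sum_triangle (g : ℕ → ℕ → ℂ) (n : ℕ) :
    ∑ k ∈ range n, ∑ i ∈ range (k+1), g i (k - i)
      = ∑ i ∈ range n, ∑ j ∈ range (n - i), g i j := by
  induction n with
  | zero => simp
  | succ n ih =>
    rw [Finset.sum_range_succ, ih]
    have h2 : ∀ i ∈ range (n+1), ∑ j ∈ range (n+1-i), g i j
        = (if i ≤ n then ∑ j ∈ range (n-i), g i j else 0) + g i (n - i) := by
      intro i hi
      simp only [mem_range] at hi
      rw [if_pos (by omega), show n+1-i = (n-i)+1 by omega, Finset.sum_range_succ]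
    rw [Finset.sum_congr rfl h2, Finset.sum_add_distrib,
      Finset.sum_range_succ (fun x => if x ≤ n then ∑ j ∈ range (n-x), g x j else 0) n]
    have h3 : ∀ i ∈ range n, (if i ≤ n then ∑ j ∈ range (n-i), g i j else 0) = ∑ j ∈ range (n-i), g i j := by
      intro i hi; simp only [mem_range] at hi; rw [if_pos (by omega)]
    rw [Finset.sum_congr rfl h3, if_pos (le_refl n), Nat.sub_self, Finset.sum_range_zero,
      Finset.sum_range_succ (fun x => g x (n - x)) n, Nat.sub_self]
    ring

private lemma sum_triangle_symm (g : ℕ → ℕ → ℂ) (n : ℕ) :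
    ∑ u ∈ range n, ∑ w ∈ range (n - u), g u w
      = ∑ w ∈ range n, ∑ u ∈ range (n - w), g u w := by
  rw [← sum_triangle (fun i j => g i j) n, ← sum_triangle (fun i j => g j i) n]
  refine Finset.sum_congr rfl fun k _ => ?_
  rw [← Finset.sum_range_reflect (fun i => g i (k - i)) (k+1)]
  refine Finset.sum_congr rfl fun i hi => ?_
  simp only [mem_range] at hi
  congr 1 <;> omega

private lemma sum_if_le (g : ℕ → ℂ) {i n : ℕ} (h : i ≤ n) :
    ∑ u ∈ range (n+1), (if u ≤ i then g u else 0) = ∑ u ∈ range (i+1), g u := by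
  rw [← Finset.sum_filter]
  congr 1
  ext u
  simp only [mem_filter, mem_range]
  omega


private lemma core_entry (p : ℂ) (A F : ℕ → ℂ) (hF0 : F 0 = -p)
    (conv : ∀ s : ℕ, ∑ v ∈ range (s+1), F v * A (s - v) = if s = 0 then -p^2 else 0)
    {i j n : ℕ} (hi : i ≤ n) (hj : j ≤ n) :
    ∑ v ∈ range (n+1),
      (∑ u ∈ range (n+1), (if u ≤ i then F (i-u) else 0) * A (u+v)) *
        (if v ≤ j then F (j-v) else 0)
      = if i = 0 then (if j = 0 then p^3 else 0)
        else if j = 0 then 0 else p^2 * F (i+j) := by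
  have h1 : ∀ v, (∑ u ∈ range (n+1), (if u ≤ i then F (i-u) else 0) * A (u+v))
      = ∑ u ∈ range (i+1), F (i-u) * A (u+v) := by
    intro v
    rw [← sum_if_le (fun u => F (i-u) * A (u+v)) hi]
    exact Finset.sum_congr rfl fun u _ => by rw [ite_mul, zero_mul]
  have h2 : (∑ v ∈ range (n+1),
      (∑ u ∈ range (n+1), (if u ≤ i then F (i-u) else 0) * A (u+v)) *
        (if v ≤ j then F (j-v) else 0))
      = ∑ v ∈ range (j+1), ∑ u ∈ range (i+1), F (i-u) * A (u+v) * F (j-v) := by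
    rw [← sum_if_le (fun v => ∑ u ∈ range (i+1), F (i-u) * A (u+v) * F (j-v)) hj]
    refine Finset.sum_congr rfl fun v _ => ?_
    rw [h1, mul_ite, mul_zero, ← Finset.sum_mul]
  rw [h2, Finset.sum_comm]
  have h3 : (∑ u ∈ range (i+1), ∑ v ∈ range (j+1), F (i-u) * A (u+v) * F (j-v))
      = ∑ u ∈ range (i+1), F u * ∑ v ∈ range (j+1), F v * A ((i-u) + (j-v)) := by
    rw [← Finset.sum_range_reflect
      (fun u => F u * ∑ v ∈ range (j+1), F v * A ((i-u) + (j-v))) (i+1)]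
    refine Finset.sum_congr rfl fun u hu => ?_
    simp only [mem_range] at hu
    rw [show i+1-1-u = i-u by omega, Finset.mul_sum]
    rw [← Finset.sum_range_reflect
      (fun v => F (i-u) * (F v * A ((i-(i-u)) + (j-v)))) (j+1)]
    refine Finset.sum_congr rfl fun v hv => ?_
    simp only [mem_range] at hv
    rw [show j+1-1-v = j-v by omega, show i-(i-u) + (j-(j-v)) = u + v by omega]
    ring
  rw [h3]
  by_cases hj0 : j = 0
  · subst hj0
    have h4 : ∀ u ∈ range (i+1), F u * ∑ v ∈ range (0+1), F v * A ((i-u) + (0-v))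
        = F 0 * (F u * A (i - u)) := by
      intro u hu
      rw [Finset.sum_range_one]
      simp only [Nat.sub_zero, Nat.add_zero]
      ring
    rw [Finset.sum_congr rfl h4, ← Finset.mul_sum, conv i, hF0]
    by_cases hi0 : i = 0 <;> simp [hi0] <;> ring
  · by_cases hi0 : i = 0
    · subst hi0
      rw [if_pos rfl, if_neg hj0]
      have h4 : ∀ v ∈ range (j+1), (fun v => F v * A ((0:ℕ)-0 + (j-v))) v
          = F v * A (j - v) := by
        intro v hv
        simp only [Nat.sub_zero, Nat.zero_add]
      rw [Finset.sum_range_one, Finset.sum_congr rfl h4, conv j, if_neg hj0, mul_zero]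
    · rw [if_neg hi0, if_neg hj0]
      -- truncation of inner convolution
      have htr : ∀ u ∈ range (i+1), F u * ∑ v ∈ range (j+1), F v * A ((i-u) + (j-v))
          = -∑ w ∈ range (i-u), F u * F (j+1+w) * A (i-1-u-w) := by
        intro u hu
        simp only [mem_range] at hu
        have e1 : ∀ v ∈ range (j+1), F v * A ((i-u) + (j-v)) = F v * A ((i-u)+j - v) := by
          intro v hv; simp only [mem_range] at hv; congr 2; omega
        have e2 : ∑ v ∈ range ((i-u)+j+1), F v * A ((i-u)+j - v)
            = (∑ v ∈ range (j+1), F v * A ((i-u)+j - v))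
              + ∑ v ∈ Ico (j+1) ((i-u)+j+1), F v * A ((i-u)+j - v) := by
          rw [Finset.range_eq_Ico, ← Finset.sum_Ico_consecutive _ (by omega : 0 ≤ j+1) (by omega : j+1 ≤ (i-u)+j+1), ← Finset.range_eq_Ico]
        have e3 : ∑ v ∈ Ico (j+1) ((i-u)+j+1), F v * A ((i-u)+j - v)
            = ∑ w ∈ range (i-u), F (j+1+w) * A (i-1-u-w) := by
          rw [Finset.sum_Ico_eq_sum_range]
          refine Finset.sum_congr (by congr 1; omega) fun w hw => ?_
          congr 2
          omega
        have e4 := conv ((i-u)+j)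
        rw [if_neg (by omega)] at e4
        rw [Finset.sum_congr rfl e1]
        have e5 : (∑ v ∈ range (j+1), F v * A ((i-u)+j - v))
            = -∑ w ∈ range (i-u), F (j+1+w) * A (i-1-u-w) := by
          rw [← e3]
          linear_combination e4 - e2
        rw [e5, mul_neg, Finset.mul_sum]
        congr 1
        exact Finset.sum_congr rfl fun w hw => by ring
      rw [Finset.sum_congr rfl htr]
      have hneg : ∑ u ∈ range (i+1), -∑ w ∈ range (i-u), F u * F (j+1+w) * A (i-1-u-w)
          = -∑ u ∈ range (i+1), ∑ w ∈ range (i-u), F u * F (j+1+w) * A (i-1-u-w) :=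
        Finset.sum_neg_distrib _
      rw [hneg, Finset.sum_range_succ, Nat.sub_self, Finset.sum_range_zero, add_zero,
        sum_triangle_symm (fun u w => F u * F (j+1+w) * A (i-1-u-w)) i]
      have hin : ∀ w ∈ range i, ∑ u ∈ range (i-w), F u * F (j+1+w) * A (i-1-u-w)
          = F (j+1+w) * (if i-1-w = 0 then -p^2 else 0) := by
        intro w hw
        simp only [mem_range] at hw
        rw [← conv (i-1-w), show i-w = (i-1-w)+1 by omega, Finset.mul_sum]
        refine Finset.sum_congr rfl fun u hu => ?_
        simp only [mem_range] at hu
        rw [show i-1-u-w = i-1-w-u by omega]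
        ring
      rw [Finset.sum_congr rfl hin]
      have hfin : ∀ w ∈ range i, F (j+1+w) * (if i-1-w = 0 then -p^2 else 0)
          = if w = i-1 then F (j+1+w) * -p^2 else 0 := by
        intro w hw
        simp only [mem_range] at hw
        by_cases hwi : w = i-1
        · rw [if_pos hwi, if_pos (by omega)]
        · rw [if_neg (by omega), if_neg hwi, mul_zero]
      rw [Finset.sum_congr rfl hfin, Finset.sum_ite_eq' (range i) (i-1)
        (fun w => F (j+1+w) * -p^2), if_pos (by simp only [mem_range]; omega),
        show j+1+(i-1) = i+j by omega]
      ring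

private lemma hankel_step (p : ℂ) (hp : p ≠ 0) (A F : ℕ → ℂ) (hF0 : F 0 = -p)
    (conv : ∀ s : ℕ, ∑ v ∈ range (s+1), F v * A (s-v) = if s = 0 then -p^2 else 0) (n : ℕ) :
    (Matrix.of fun i j : Fin (n+1) => A (i.1 + j.1)).det
      = p * (Matrix.of fun i j : Fin n => F (i.1 + 1 + (j.1 + 1))).det := by
  set Aop : Matrix (Fin (n+1)) (Fin (n+1)) ℂ := Matrix.of fun i j => A (i.1 + j.1) with hAop
  set T : Matrix (Fin (n+1)) (Fin (n+1)) ℂ :=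
    Matrix.of fun i j => if j.1 ≤ i.1 then F (i.1 - j.1) else 0 with hT
  have hTtri : T.BlockTriangular OrderDual.toDual := by
    intro i j hij
    have : i < j := hij
    simp only [hT, Matrix.of_apply]
    rw [if_neg (by exact Nat.not_le.mpr this)]
  have hTdet : T.det = (-p)^(n+1) := by
    rw [Matrix.det_of_lowerTriangular T hTtri]
    have : ∀ i : Fin (n+1), T i i = -p := by
      intro i; simp only [hT, Matrix.of_apply, le_refl, if_pos, Nat.sub_self, hF0]
    rw [Finset.prod_congr rfl (fun i _ => this i), Finset.prod_const, Finset.card_univ,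
      Fintype.card_fin]
  set M : Matrix (Fin (n+1)) (Fin (n+1)) ℂ := T * Aop * T.transpose with hMdef
  have hM : ∀ i j : Fin (n+1), M i j = if i.1 = 0 then (if j.1 = 0 then p^3 else 0)
      else if j.1 = 0 then 0 else p^2 * F (i.1+j.1) := by
    intro i j
    have h1 : M i j = ∑ q : Fin (n+1),
        (∑ u : Fin (n+1), (if u.1 ≤ i.1 then F (i.1-u.1) else 0) * A (u.1 + q.1)) *
          (if q.1 ≤ j.1 then F (j.1-q.1) else 0) := by
      simp only [hMdef, Matrix.mul_apply, Matrix.transpose_apply, hT, hAop, Matrix.of_apply]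
    rw [h1]
    have h2 : ∀ q : Fin (n+1),
        (∑ u : Fin (n+1), (if u.1 ≤ i.1 then F (i.1-u.1) else 0) * A (u.1 + q.1))
          = ∑ u ∈ range (n+1), (if u ≤ i.1 then F (i.1-u) else 0) * A (u + q.1) := by
      intro q
      exact Fin.sum_univ_eq_sum_range (fun u => (if u ≤ i.1 then F (i.1-u) else 0) * A (u + q.1)) (n+1)
    rw [Finset.sum_congr rfl (fun q _ => by rw [h2 q])]
    rw [Fin.sum_univ_eq_sum_range (fun v =>
      (∑ u ∈ range (n+1), (if u ≤ i.1 then F (i.1-u) else 0) * A (u + v)) *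
        (if v ≤ j.1 then F (j.1-v) else 0)) (n+1)]
    exact core_entry p A F hF0 conv (Nat.lt_succ_iff.mp i.isLt) (Nat.lt_succ_iff.mp j.isLt)
  have hMdet1 : M.det = (-p)^(n+1) * Aop.det * (-p)^(n+1) := by
    rw [hMdef, Matrix.det_mul, Matrix.det_mul, Matrix.det_transpose, hTdet]
  have hsub : M.submatrix (0 : Fin (n+1)).succAbove Fin.succ
      = (p^2 : ℂ) • Matrix.of (fun i j : Fin n => F (i.1 + 1 + (j.1 + 1))) := by
    ext i j
    rw [Matrix.submatrix_apply, Fin.zero_succAbove, hM]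
    simp only [Fin.val_succ, Matrix.smul_apply, Matrix.of_apply, smul_eq_mul]
    rw [if_neg (by omega), if_neg (by omega)]
  have hMdet2 : M.det = p^3 * ((p^2)^n *
      (Matrix.of (fun i j : Fin n => F (i.1 + 1 + (j.1 + 1)))).det) := by
    rw [Matrix.det_succ_column_zero]
    rw [Finset.sum_eq_single_of_mem (0 : Fin (n+1)) (Finset.mem_univ _)]
    · rw [hsub, Matrix.det_smul, Fintype.card_fin, hM]
      simp
    · intro b _ hb
      rw [hM]
      have hb' : (b : ℕ) ≠ 0 := fun h => hb (Fin.ext (by rw [h, Fin.val_zero]))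
      rw [if_neg hb']
      simp
  have hfinal : p^(2*n+2) * Aop.det = p^(2*n+2) * (p * (Matrix.of (fun i j : Fin n => F (i.1 + 1 + (j.1 + 1)))).det) := by
    have e := hMdet1.symm.trans hMdet2
    have hneg : (-p)^(n+1) * (-p)^(n+1) = p^(2*n+2) := by
      rw [← pow_add, show (n+1)+(n+1) = 2*(n+1) by ring, pow_mul, neg_sq, ← pow_mul,
        show 2*(n+1) = 2*n+2 by ring]
    calc p^(2*n+2) * Aop.det = (-p)^(n+1) * Aop.det * (-p)^(n+1) := by
          rw [show (-p)^(n+1) * Aop.det * (-p)^(n+1)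
              = ((-p)^(n+1) * (-p)^(n+1)) * Aop.det by ring, hneg]
      _ = p^3 * ((p^2)^n * _) := e
      _ = p^(2*n+2) * (p * _) := by rw [← pow_mul]; ring
  exact mul_left_cancel₀ (pow_ne_zero _ hp) hfinal

private lemma conv_key (φ ψ : ℂ → ℂ) (hφ : Differentiable ℂ φ) (hψ : Differentiable ℂ ψ)
    (hφ0 : ∀ x : ℂ, φ x ≠ 0)
    (a : ℕ → ℂ → ℂ) (ha0 : a 0 = φ)
    (ha : ∀ n : ℕ, a (n + 1) =
      deriv (a n) + fun x => ψ x * ∑ k ∈ Finset.range n, a k x * a (n - 1 - k) x)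
    (f : ℕ → ℂ → ℂ) (hf0 : f 0 = fun x => -φ x) (hf1 : f 1 = deriv φ)
    (hf2 : f 2 = fun x =>
      (deriv (deriv φ) x * φ x - (deriv φ x) ^ 2 + ψ x * (φ x) ^ 3) / φ x)
    (hf : ∀ n : ℕ, f (n + 3) = deriv (f (n + 2)) + fun x =>
      (1 / φ x) * ∑ k ∈ Finset.Icc 2 (n + 1), f k x * f (n + 3 - k) x) :
    ∀ n : ℕ, ∀ x : ℂ, ∑ k ∈ range (n+1), a k x * f (n-k) x
      = if n = 0 then -(φ x)^2 else 0 := by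
  have hD : ∀ g : ℂ → ℂ, Differentiable ℂ g → Differentiable ℂ (deriv g) := fun g hg =>
    (contDiff_infty_iff_deriv.mp hg.contDiff).2.differentiable (by norm_num)
  have haD : ∀ n, Differentiable ℂ (a n) := by
    intro n
    induction n using Nat.strong_induction_on with
    | _ n IH =>
      rcases n with _ | m
      · rw [ha0]; exact hφ
      · rw [ha m]
        refine Differentiable.add (hD _ (IH m (by omega))) (hψ.mul ?_)
        refine Differentiable.fun_sum fun k hk => ?_
        simp only [mem_range] at hk
        exact (IH k (by omega)).mul (IH (m-1-k) (by omega))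
  have hfD : ∀ n, Differentiable ℂ (f n) := by
    intro n
    induction n using Nat.strong_induction_on with
    | _ n IH =>
      match n with
      | 0 => rw [hf0]; exact hφ.neg
      | 1 => rw [hf1]; exact hD φ hφ
      | 2 =>
        rw [hf2]
        exact Differentiable.div
          ((((hD _ (hD _ hφ)).mul hφ).sub ((hD _ hφ).pow 2)).add (hψ.mul (hφ.pow 3))) hφ hφ0
      | (m+3) =>
        rw [hf m]
        refine Differentiable.add (hD _ (IH (m+2) (by omega))) ?_
        refine Differentiable.mul ((differentiable_const (1:ℂ)).div hφ hφ0) ?_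
        refine Differentiable.fun_sum fun k hk => ?_
        simp only [mem_Icc] at hk
        exact (IH k (by omega)).mul (IH (m+3-k) (by omega))
  have hda : ∀ n x, deriv (a n) x
      = a (n+1) x - ψ x * ∑ k ∈ range n, a k x * a (n-1-k) x := by
    intro n x
    rw [ha n]
    simp only [Pi.add_apply]
    ring
  have hdf2 : ∀ m x, deriv (f (m+2)) x
      = f (m+3) x - (1/φ x) * ∑ k ∈ Finset.Icc 2 (m+1), f k x * f (m+3-k) x := by
    intro m x
    rw [hf m]
    simp only [Pi.add_apply]
    ring
  have hdf0 : ∀ x, deriv (f 0) x = -(f 1 x) := by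
    intro x
    rw [hf0, hf1]
    exact deriv.neg
  have ha1 : a 1 = deriv φ := by
    rw [ha 0]
    funext y
    simp [ha0]
  have hF2 : ∀ x, f 2 x * φ x
      = deriv (deriv φ) x * φ x - (deriv φ x)^2 + ψ x * (φ x)^3 := by
    intro x
    rw [hf2]
    exact div_mul_cancel₀ _ (hφ0 x)
  intro n
  induction n using Nat.strong_induction_on with
  | _ n IH =>
    match n with
    | 0 => intro x; rw [if_pos rfl, Finset.sum_range_one, ha0, hf0]; ring
    | 1 =>
      intro x
      rw [if_neg one_ne_zero, Finset.sum_range_succ, Finset.sum_range_one, ha0, hf0, ha1, hf1]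
      norm_num
      ring
    | 2 =>
      intro x
      rw [if_neg two_ne_zero, Finset.sum_range_succ, Finset.sum_range_succ, Finset.sum_range_one]
      have ha2 : a 2 x = deriv (deriv φ) x + ψ x * (φ x * φ x) := by
        rw [ha 1, ha1]
        simp [ha0]
      rw [ha2, ha0, ha1, hf1, hf0]
      simp only
      have := hF2 x
      linear_combination this
    | (m+3) =>
      intro x
      rw [if_neg (by omega)]
      show ∑ k ∈ range (m+4), a k x * f (m+3-k) x = 0
      have CIH : ∀ s, 1 ≤ s → s ≤ m+2 → ∑ k ∈ range (s+1), a k x * f (s-k) x = 0 := by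
        intro s h1 h2
        have := IH s (by omega) x
        rwa [if_neg (by omega)] at this
      -- the derivative of C_{m+2} at x is zero, and equals the expanded sum
      have funeq : (fun y => ∑ k ∈ range (m+2+1), a k y * f (m+2-k) y) = fun _ => (0:ℂ) := by
        funext y
        have := IH (m+2) (by omega) y
        rwa [if_neg (by omega)] at this
      have hHD : HasDerivAt (fun y => ∑ k ∈ range (m+2+1), a k y * f (m+2-k) y)
          (∑ k ∈ range (m+2+1),
            (deriv (a k) x * f (m+2-k) x + a k x * deriv (f (m+2-k)) x)) x := by
        refine HasDerivAt.fun_sum fun k _ => ?_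
        exact ((haD k).differentiableAt.hasDerivAt).mul ((hfD (m+2-k)).differentiableAt.hasDerivAt)
      have EQ0 : (∑ k ∈ range (m+3), deriv (a k) x * f (m+2-k) x)
          + (∑ k ∈ range (m+3), a k x * deriv (f (m+2-k)) x) = 0 := by
        have h0 : HasDerivAt (fun y => ∑ k ∈ range (m+2+1), a k y * f (m+2-k) y) 0 x := by
          rw [funeq]; exact hasDerivAt_const x 0
        have := hHD.unique h0
        rw [show m+2+1 = m+3 from rfl] at this
        rw [← Finset.sum_add_distrib]
        exact this
      -- ===== Term S1 =====
      have hS1 : ∑ k ∈ range (m+3), deriv (a k) x * f (m+2-k) x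
          = (∑ k ∈ range (m+3), a (k+1) x * f (m+2-k) x)
            - ψ x * ∑ k ∈ range (m+3), (∑ i ∈ range k, a i x * a (k-1-i) x) * f (m+2-k) x := by
        rw [Finset.mul_sum, ← Finset.sum_sub_distrib]
        refine Finset.sum_congr rfl fun k _ => ?_
        rw [hda k x]
        ring
      have hS1I : ∑ k ∈ range (m+3), a (k+1) x * f (m+2-k) x
          = (∑ k ∈ range (m+4), a k x * f (m+3-k) x) - a 0 x * f (m+3) x := by
        have e := Finset.sum_range_succ' (fun k => a k x * f (m+3-k) x) (m+3)
        rw [show m+3+1 = m+4 from rfl] at e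
        rw [e, Nat.sub_zero]
        have : ∀ k ∈ range (m+3), a (k+1) x * f (m+3-(k+1)) x = a (k+1) x * f (m+2-k) x := by
          intro k hk
          rw [show m+3-(k+1) = m+2-k by omega]
        rw [Finset.sum_congr rfl this]
        ring
      have hJ : ∑ k ∈ range (m+3), (∑ i ∈ range k, a i x * a (k-1-i) x) * f (m+2-k) x
          = -(a (m+1) x * (φ x)^2) := by
        have e := Finset.sum_range_succ' (fun k => (∑ i ∈ range k, a i x * a (k-1-i) x) * f (m+2-k) x) (m+2)
        rw [show m+2+1 = m+3 from rfl] at e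
        rw [e]
        simp only [Finset.range_zero, Finset.sum_empty, zero_mul, add_zero]
        have e2 : ∀ k ∈ range (m+2), (∑ i ∈ range (k+1), a i x * a (k+1-1-i) x) * f (m+2-(k+1)) x
            = ∑ i ∈ range (k+1), a i x * a (k-i) x * f (m+1-(i+(k-i))) x := by
          intro k hk
          simp only [mem_range] at hk
          rw [Finset.sum_mul]
          refine Finset.sum_congr rfl fun i hi => ?_
          simp only [mem_range] at hi
          rw [show m+1-(i+(k-i)) = m+2-(k+1) by omega, show k+1-1-i = k-i by omega]
        rw [Finset.sum_congr rfl e2, sum_triangle (fun i j => a i x * a j x * f (m+1-(i+j)) x) (m+2)]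
        have e3 : ∀ i ∈ range (m+2), ∑ j ∈ range (m+2-i), a i x * a j x * f (m+1-(i+j)) x
            = if i = m+1 then a i x * -(φ x)^2 else 0 := by
          intro i hi
          simp only [mem_range] at hi
          by_cases him : i = m+1
          · subst him
            rw [if_pos rfl, show m+2-(m+1) = 1 by omega, Finset.sum_range_one]
            rw [show m+1-(m+1+0) = 0 by omega, ha0, hf0]
            ring
          · rw [if_neg him]
            have hrw : ∀ j ∈ range (m+2-i), a i x * a j x * f (m+1-(i+j)) x
                = a i x * (a j x * f ((m+1-i)-j) x) := by
              intro j hj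
              rw [show m+1-(i+j) = (m+1-i)-j by omega]
              ring
            rw [Finset.sum_congr rfl hrw, ← Finset.mul_sum,
              show m+2-i = (m+1-i)+1 by omega, CIH (m+1-i) (by omega) (by omega), mul_zero]
        rw [Finset.sum_congr rfl e3, Finset.sum_ite_eq' (range (m+2)) (m+1)
          (fun i => a i x * -(φ x)^2), if_pos (by simp only [mem_range]; omega)]
        ring
      -- ===== Term S2 =====
      have hS2split : ∑ k ∈ range (m+3), a k x * deriv (f (m+2-k)) x
          = (∑ k ∈ range (m+1), a k x * deriv (f (m+2-k)) x)
            + a (m+1) x * deriv (f 1) x + a (m+2) x * deriv (f 0) x := by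
        rw [Finset.sum_range_succ, Finset.sum_range_succ, show m+2-(m+1) = 1 by omega,
          show m+2-(m+2) = 0 by omega]
      have hS2main : ∑ k ∈ range (m+1), a k x * deriv (f (m+2-k)) x
          = (∑ k ∈ range (m+1), a k x * f (m+3-k) x)
            - (1/φ x) * ∑ k ∈ range (m+1), a k x *
                (∑ l ∈ Finset.Icc 2 (m-k+1), f l x * f (m-k+3-l) x) := by
        rw [Finset.mul_sum, ← Finset.sum_sub_distrib]
        refine Finset.sum_congr rfl fun k hk => ?_
        simp only [mem_range] at hk
        rw [show m+2-k = (m-k)+2 by omega, hdf2 (m-k) x, show m-k+3 = m+3-k by omega]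
        ring
      have hS2I : ∑ k ∈ range (m+1), a k x * f (m+3-k) x
          = (∑ k ∈ range (m+4), a k x * f (m+3-k) x)
            - a (m+1) x * f 2 x - a (m+2) x * f 1 x - a (m+3) x * f 0 x := by
        have e1 := Finset.sum_range_succ (fun k => a k x * f (m+3-k) x) (m+3)
        have e2 := Finset.sum_range_succ (fun k => a k x * f (m+3-k) x) (m+2)
        have e3 := Finset.sum_range_succ (fun k => a k x * f (m+3-k) x) (m+1)
        rw [show m+3+1 = m+4 from rfl, show m+3-(m+3) = 0 by omega] at e1
        rw [show m+3-(m+2) = 1 by omega] at e2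
        rw [show m+3-(m+1) = 2 by omega] at e3
        rw [e1, e2, e3]
        ring
      -- the double sum
      have hS2II : ∑ k ∈ range (m+1), a k x *
            (∑ l ∈ Finset.Icc 2 (m-k+1), f l x * f (m-k+3-l) x)
          = -(f 1 x) * (-(a 0 x * f (m+2) x) - a (m+1) x * f 1 x - a (m+2) x * f 0 x)
            - f 0 x * ((∑ k ∈ range (m+4), a k x * f (m+3-k) x)
              - a 0 x * f (m+3) x - a 1 x * f (m+2) x - a (m+2) x * f 1 x - a (m+3) x * f 0 x) := by
        have e1 : ∀ k ∈ range (m+1), a k x * (∑ l ∈ Finset.Icc 2 (m-k+1), f l x * f (m-k+3-l) x)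
            = ∑ w ∈ range (m-k), a k x * f (w+2) x * f (m+1-k-w) x := by
          intro k hk
          simp only [mem_range] at hk
          rw [← Finset.Ico_add_one_right_eq_Icc, Finset.sum_Ico_eq_sum_range, Finset.mul_sum]
          refine Finset.sum_congr (by congr 1) fun w hw => ?_
          simp only [mem_range] at hw
          rw [show m-k+3-(2+w) = m+1-k-w by omega, show 2+w = w+2 by omega]
          ring
        rw [Finset.sum_congr rfl e1]
        have e2 : ∑ k ∈ range (m+1), ∑ w ∈ range (m-k), a k x * f (w+2) x * f (m+1-k-w) x
            = ∑ k ∈ range m, ∑ w ∈ range (m-k), a k x * f (w+2) x * f (m+1-k-w) x := by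
          rw [Finset.sum_range_succ, Nat.sub_self, Finset.sum_range_zero, add_zero]
        rw [e2, sum_triangle_symm (fun k w => a k x * f (w+2) x * f (m+1-k-w) x) m]
        have e3 : ∀ w ∈ range m, ∑ k ∈ range (m-w), a k x * f (w+2) x * f (m+1-k-w) x
            = f (w+2) x * (-(a (m-w) x * f 1 x) - a (m+1-w) x * f 0 x) := by
          intro w hw
          simp only [mem_range] at hw
          have c := CIH (m+1-w) (by omega) (by omega)
          rw [show m+1-w+1 = (m-w)+1+1 by omega, Finset.sum_range_succ, Finset.sum_range_succ] at c
          rw [show m+1-w-((m-w)+1) = 0 by omega, show m+1-w-(m-w) = 1 by omega,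
            show (m-w)+1 = m+1-w by omega] at c
          have e4 : ∀ k ∈ range (m-w), a k x * f (w+2) x * f (m+1-k-w) x
              = f (w+2) x * (a k x * f (m+1-w-k) x) := by
            intro k hk
            simp only [mem_range] at hk
            rw [show m+1-k-w = m+1-w-k by omega]
            ring
          rw [Finset.sum_congr rfl e4, ← Finset.mul_sum]
          congr 1
          linear_combination c
        rw [Finset.sum_congr rfl e3]
        have e5 : ∀ w ∈ range m, f (w+2) x * (-(a (m-w) x * f 1 x) - a (m+1-w) x * f 0 x)
            = -(f 1 x) * (a (m-w) x * f (w+2) x) - f 0 x * (a (m+1-w) x * f (w+2) x) := by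
          intro w _
          ring
        rw [Finset.sum_congr rfl e5, Finset.sum_sub_distrib, ← Finset.mul_sum, ← Finset.mul_sum]
        -- Y' sum
        have eY : ∑ w ∈ range m, a (m-w) x * f (w+2) x
            = -(a 0 x * f (m+2) x) - a (m+1) x * f 1 x - a (m+2) x * f 0 x := by
          have c := CIH (m+2) (by omega) (by omega)
          rw [show m+2+1 = m+3 from rfl] at c
          rw [Finset.sum_range_succ' (fun k => a k x * f (m+2-k) x) (m+2)] at c
          rw [Finset.sum_range_succ, Finset.sum_range_succ] at c
          rw [show m+2-(m+1+1) = 0 by omega, show m+2-(m+1) = 1 by omega, Nat.sub_zero] at c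
          have er : ∑ w ∈ range m, a (m-w) x * f (w+2) x
              = ∑ w ∈ range m, a (w+1) x * f (m+2-(w+1)) x := by
            rw [← Finset.sum_range_reflect (fun w => a (w+1) x * f (m+2-(w+1)) x) m]
            refine Finset.sum_congr rfl fun w hw => ?_
            simp only [mem_range] at hw
            rw [show m+2-(m-1-w+1) = w+2 by omega, show m-1-w+1 = m-w by omega]
          rw [er]
          linear_combination c
        -- X' sum
        have eX : ∑ w ∈ range m, a (m+1-w) x * f (w+2) x
            = (∑ k ∈ range (m+4), a k x * f (m+3-k) x)
              - a 0 x * f (m+3) x - a 1 x * f (m+2) x - a (m+2) x * f 1 x - a (m+3) x * f 0 x := by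
          have e0 := Finset.sum_range_succ' (fun k => a k x * f (m+3-k) x) (m+3)
          rw [show m+3+1 = m+4 from rfl, Nat.sub_zero] at e0
          have e1 := Finset.sum_range_succ' (fun k => a (k+1) x * f (m+3-(k+1)) x) (m+2)
          rw [show m+2+1 = m+3 from rfl, show m+3-(0+1) = m+2 by omega] at e1
          have e2 := Finset.sum_range_succ (fun k => a (k+1+1) x * f (m+3-(k+1+1)) x) (m+1)
          rw [show m+1+1+1 = m+3 by omega, show m+3-(m+3) = 0 by omega,
            show m+1+1 = m+2 from rfl] at e2
          have e3 := Finset.sum_range_succ (fun k => a (k+1+1) x * f (m+3-(k+1+1)) x) m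
          rw [show m+1+1 = m+2 from rfl, show m+3-(m+2) = 1 by omega] at e3
          have er : ∑ w ∈ range m, a (m+1-w) x * f (w+2) x
              = ∑ w ∈ range m, a (w+1+1) x * f (m+3-(w+1+1)) x := by
            rw [← Finset.sum_range_reflect (fun w => a (w+1+1) x * f (m+3-(w+1+1)) x) m]
            refine Finset.sum_congr rfl fun w hw => ?_
            simp only [mem_range] at hw
            rw [show m+3-(m-1-w+1+1) = w+2 by omega, show m-1-w+1+1 = m+1-w by omega]
          rw [er]
          linear_combination -e0 - e1 - e2 - e3
        rw [eY, eX]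
      -- ===== assemble =====
      have hBr : ψ x * (φ x)^2 - f 2 x - f 1 x * f 1 x * (1/φ x) + deriv (deriv φ) x = 0 := by
        rw [hf1, hf2]
        have hp := hφ0 x
        field_simp
        ring
      have hval0 : a 0 x = φ x := by rw [ha0]
      have hvalf0 : f 0 x = -(φ x) := by rw [hf0]
      have hvala1 : a 1 x = f 1 x := by rw [ha1, hf1]
      have hdf1 : deriv (f 1) x = deriv (deriv φ) x := by rw [hf1]
      rw [hS1, hS1I, hJ, hS2split, hS2main, hS2I, hS2II, hdf1, hdf0 x] at EQ0
      rw [hval0, hvalf0, hvala1] at EQ0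
      -- now EQ0 is polynomial in the atoms; extract the conclusion
      have hp := hφ0 x
      have hinv : (1/φ x) * φ x = 1 := by field_simp
      linear_combination EQ0 - a (m+1) x * hBr
        - (-(∑ k ∈ range (m+4), a k x * f (m+3-k) x) + φ x * f (m+3) x
            + 2 * (a (m+2) x * f 1 x) - a (m+3) x * φ x) * hinv


/-- **Proposition 3.4 (positive side).** Under the conditions
`ψ''/ψ = φ''/φ = −2ψφ + 2x` and `φ'ψ − φψ' = 2α`, with `φ` nowhere vanishing, the
Hankel determinants `θ_{n+1} = det(f_{i+j})_{1≤i,j≤n}` built from the second formal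
Riccati solution coincide, for `n ≥ 1`, with `τ_n/φ`, where `τ_n` (`n > 0`) are the
Hankel determinants `det(a_{i+j})` of the Painlevé II tau functions normalized by
`τ₀ = 1`, `τ₁ = φ`. -/
theorem theta_eq_tau_div_phi
    (α : ℂ) (φ ψ : ℂ → ℂ) (hφ : Differentiable ℂ φ) (hψ : Differentiable ℂ ψ)
    (hφ0 : ∀ x : ℂ, φ x ≠ 0)
    (hψ'' : ∀ x : ℂ, deriv (deriv ψ) x = (2 * x - 2 * ψ x * φ x) * ψ x)
    (hφ'' : ∀ x : ℂ, deriv (deriv φ) x = (2 * x - 2 * ψ x * φ x) * φ x)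
    (hW : ∀ x : ℂ, deriv φ x * ψ x - φ x * deriv ψ x = 2 * α)
    (a : ℕ → ℂ → ℂ)
    (ha0 : a 0 = φ)
    (ha : ∀ n : ℕ, a (n + 1) =
      deriv (a n) + fun x => ψ x * ∑ k ∈ Finset.range n, a k x * a (n - 1 - k) x)
    (τ : ℤ → ℂ → ℂ)
    (hτ0 : τ 0 = 1)
    (hτpos : ∀ N : ℕ, τ ((N : ℤ) + 1) =
      fun x => (Matrix.of fun i j : Fin (N + 1) => a (i.1 + j.1) x).det)
    (hτnz : ∀ m : ℤ, 0 < m → ∀ x : ℂ, τ m x ≠ 0)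
    (f : ℕ → ℂ → ℂ)
    (hf0 : f 0 = fun x => -φ x)
    (hf1 : f 1 = deriv φ)
    (hf2 : f 2 = fun x =>
      (deriv (deriv φ) x * φ x - (deriv φ x) ^ 2 + ψ x * (φ x) ^ 3) / φ x)
    (hf : ∀ n : ℕ, f (n + 3) = deriv (f (n + 2)) + fun x =>
      (1 / φ x) * ∑ k ∈ Finset.Icc 2 (n + 1), f k x * f (n + 3 - k) x)
    (θ : ℤ → ℂ → ℂ)
    (hθ1 : θ 1 = 1)
    (hθ : ∀ n : ℕ, 0 < n →
      θ ((n : ℤ) + 1) = fun x => (Matrix.of fun i j : Fin n => f (i.1 + 1 + (j.1 + 1)) x).det) :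
    ∀ n : ℤ, 1 ≤ n → ∀ x : ℂ, θ n x = τ n x / φ x := by
  have key := conv_key φ ψ hφ hψ hφ0 a ha0 ha f hf0 hf1 hf2 hf
  have conv : ∀ x : ℂ, ∀ s : ℕ, ∑ v ∈ Finset.range (s+1), f v x * a (s-v) x
      = if s = 0 then -(φ x)^2 else 0 := by
    intro x s
    rw [← key s x, ← Finset.sum_range_reflect (fun k => a k x * f (s-k) x) (s+1)]
    refine Finset.sum_congr rfl fun v hv => ?_
    simp only [Finset.mem_range] at hv
    rw [show s-(s+1-1-v) = v by omega, show s+1-1-v = s-v by omega]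
    ring
  intro n hn x
  obtain ⟨N, rfl⟩ : ∃ N : ℕ, n = (N : ℤ) + 1 := ⟨(n-1).toNat, by omega⟩
  rcases N with _ | M
  · have h2 : τ 1 x = (Matrix.of fun i j : Fin 1 => a (i.1 + j.1) x).det :=
      congrFun (hτpos 0) x
    have h1 : θ ((0:ℕ) + 1 : ℤ) x = 1 := by
      rw [show (((0:ℕ):ℤ) + 1) = 1 by norm_num, hθ1]
      rfl
    rw [h1, show (((0:ℕ):ℤ) + 1) = 1 by norm_num, h2, Matrix.det_fin_one]
    simp only [Matrix.of_apply, Fin.val_zero, Nat.add_zero, ha0]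
    rw [div_self (hφ0 x)]
  · have hs := hankel_step (φ x) (hφ0 x) (fun k => a k x) (fun k => f k x)
      (show f 0 x = -(φ x) by rw [hf0]) (conv x) (M+1)
    have h1 : θ ((M+1:ℕ) + 1 : ℤ) x
        = (Matrix.of fun i j : Fin (M+1) => f (i.1 + 1 + (j.1 + 1)) x).det :=
      congrFun (hθ (M+1) (Nat.succ_pos M)) x
    have h2 : τ ((M+1:ℕ) + 1 : ℤ) x
        = (Matrix.of fun i j : Fin (M+1+1) => a (i.1 + j.1) x).det :=
      congrFun (hτpos (M+1)) x
    rw [h1, h2, hs, mul_div_cancel_left₀ _ (hφ0 x)]
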